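/- For all integers 0 < k < n, |p_{2k,2n} − d_{k,n}| ≤ n/(6·π·(k·(n−k))^{3/2}). -/

import Mathlib

open Real Filter Topology

noncomputable def aSeq (n : ℕ) : ℝ := (Nat.centralBinom n : ℝ) / 4 ^ n

lemma aSeq_pos (n : ℕ) : 0 < aSeq n :=
  div_pos (by exact_mod_cast Nat.centralBinom_pos n) (by positivity)

lemma aSeq_succ (n : ℕ) : aSeq (n + 1) = aSeq n * ((2 * n + 1) / (2 * n + 2)) := by
  have h' : ((n:ℝ) + 1) * (Nat.centralBinom (n+1) : ℝ)
      = 2 * (2 * n + 1) * (Nat.centralBinom n : ℝ) := by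
    exact_mod_cast Nat.succ_mul_centralBinom_succ n
  have hn1 : ((n:ℝ) + 1) ≠ 0 := by positivity
  have key : (Nat.centralBinom (n+1) : ℝ) = 2*(2*n+1)*(Nat.centralBinom n) / (n+1) := by
    rw [eq_div_iff hn1]; linarith [h']
  unfold aSeq
  rw [key]
  field_simp
  ring

lemma aSeq_stirling (n : ℕ) (hn : 1 ≤ n) :
    aSeq n * Real.sqrt n = Stirling.stirlingSeq (2 * n) / (Stirling.stirlingSeq n) ^ 2 := by
  have hn0 : (0:ℝ) < n := by exact_mod_cast hn
  have hsn : (0:ℝ) < Real.sqrt n := Real.sqrt_pos.2 hn0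
  have hfac : ((n.factorial : ℝ)) ≠ 0 := by positivity
  have hfac2 : (((2*n).factorial : ℝ)) ≠ 0 := by positivity
  have hexp : (0:ℝ) < (n:ℝ)/Real.exp 1 := by positivity
  have hpn : ((n:ℝ)/Real.exp 1) ^ (2*n) ≠ 0 := pow_ne_zero _ hexp.ne'
  have hsn2 : (Stirling.stirlingSeq n)^2
      = (n.factorial:ℝ)^2 / ((2*(n:ℝ)) * ((n:ℝ)/Real.exp 1)^(2*n)) := by
    unfold Stirling.stirlingSeq
    rw [div_pow, mul_pow, Real.sq_sqrt (by positivity), ← pow_mul, mul_comm n 2]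
  have hs2n : Stirling.stirlingSeq (2*n)
      = ((2*n).factorial : ℝ) / ((2 * Real.sqrt n) * (4^n * ((n:ℝ)/Real.exp 1)^(2*n))) := by
    unfold Stirling.stirlingSeq
    have hcast : ((2*n : ℕ) : ℝ) = 2 * (n:ℝ) := by push_cast; ring
    rw [hcast]
    have h4 : Real.sqrt (2 * (2 * (n:ℝ))) = 2 * Real.sqrt n := by
      rw [show 2 * (2 * (n:ℝ)) = 4 * n by ring, Real.sqrt_mul (by norm_num) (n:ℝ),
        show (4:ℝ) = 2^2 by norm_num, Real.sqrt_sq (by norm_num)]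
    rw [h4]
    have hpow : (2 * (n:ℝ) / Real.exp 1) ^ (2*n) = 4 ^ n * ((n:ℝ) / Real.exp 1) ^ (2*n) := by
      rw [show 2 * (n:ℝ) / Real.exp 1 = 2 * ((n:ℝ)/Real.exp 1) by ring, mul_pow, pow_mul]
      norm_num
    rw [hpow]
  rw [hs2n, hsn2]
  unfold aSeq
  rw [Nat.centralBinom, Nat.cast_choose ℝ (by omega : n ≤ 2*n), show (2*n - n : ℕ) = n by omega]
  have hs2 : Real.sqrt n * Real.sqrt n = (n:ℝ) := Real.mul_self_sqrt hn0.le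
  field_simp
  ring_nf
  rw [Real.sq_sqrt hn0.le]


lemma tendsto_aSeq_sqrt :
    Tendsto (fun n : ℕ => aSeq n * Real.sqrt n) atTop (𝓝 (1 / Real.sqrt π)) := by
  have h2m : Tendsto (fun n : ℕ => 2 * n) atTop atTop :=
    tendsto_atTop_mono (fun n => by simpa using (by omega : n ≤ 2*n)) tendsto_id
  have h2 : Tendsto (fun n : ℕ => Stirling.stirlingSeq (2 * n)) atTop (𝓝 (Real.sqrt π)) :=
    Stirling.tendsto_stirlingSeq_sqrt_pi.comp h2m
  have h3 : Tendsto (fun n : ℕ => (Stirling.stirlingSeq n) ^ 2) atTop (𝓝 ((Real.sqrt π) ^ 2)) :=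
    Stirling.tendsto_stirlingSeq_sqrt_pi.pow 2
  have hne : (Real.sqrt π) ^ 2 ≠ 0 := by positivity
  have h4 := h2.div h3 hne
  have hconst : Real.sqrt π / (Real.sqrt π) ^ 2 = 1 / Real.sqrt π := by
    rw [sq]
    field_simp
  rw [hconst] at h4
  apply h4.congr'
  filter_upwards [eventually_ge_atTop 1] with n hn
  exact (aSeq_stirling n hn).symm

lemma tendsto_aSeq_sqrt_add (c : ℝ) (hc : 0 ≤ c) :
    Tendsto (fun n : ℕ => aSeq n * Real.sqrt ((n:ℝ) + c)) atTop (𝓝 (1 / Real.sqrt π)) := by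
  have h2 : Tendsto (fun n : ℕ => Real.sqrt (1 + c / n)) atTop (𝓝 1) := by
    have hb : Tendsto (fun n : ℕ => 1 + c / (n:ℝ)) atTop (𝓝 1) := by
      have := (tendsto_const_div_atTop_nhds_zero_nat c).const_add 1
      simpa using this
    have := (Real.continuous_sqrt.tendsto 1).comp hb
    rw [Real.sqrt_one] at this; exact this
  have h := tendsto_aSeq_sqrt.mul h2
  rw [mul_one] at h
  apply h.congr'
  filter_upwards [eventually_ge_atTop 1] with n hn
  have hn0 : (0:ℝ) < n := by exact_mod_cast hn
  have : Real.sqrt ((n:ℝ) + c) = Real.sqrt n * Real.sqrt (1 + c / n) := by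
    rw [← Real.sqrt_mul hn0.le]
    congr 1
    field_simp
  rw [this]
  ring


lemma sqrt_step (n : ℕ) (c : ℝ) (hc : 0 ≤ c)
    (h : ((n:ℝ) + c) * (2*n+2)^2 ≤ (2*n+1)^2 * ((n:ℝ)+1+c)) :
    Real.sqrt ((n:ℝ) + c) ≤ (2*n+1)/(2*n+2) * Real.sqrt ((n:ℝ)+1+c) := by
  have h2 : (0:ℝ) < 2*(n:ℝ)+2 := by positivity
  have hq : (0:ℝ) ≤ (2*(n:ℝ)+1)/(2*n+2) := by positivity
  have key : ((n:ℝ) + c) ≤ ((2*(n:ℝ)+1)/(2*n+2))^2 * ((n:ℝ)+1+c) := by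
    rw [div_pow, div_mul_eq_mul_div, le_div_iff₀ (by positivity)]
    nlinarith [h]
  have := Real.sqrt_le_sqrt key
  rwa [Real.sqrt_mul (by positivity), Real.sqrt_sq hq] at this

lemma b_mono : Monotone (fun n : ℕ => aSeq n * Real.sqrt ((n:ℝ) + 4⁻¹)) := by
  apply monotone_nat_of_le_succ
  intro n
  rw [aSeq_succ n]
  have hs : Real.sqrt ((n:ℝ) + 4⁻¹) ≤ (2*n+1)/(2*n+2) * Real.sqrt ((n:ℝ)+1+4⁻¹) := by
    apply sqrt_step n 4⁻¹ (by norm_num)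
    nlinarith [sq_nonneg ((n:ℝ))]
  calc aSeq n * Real.sqrt ((n:ℝ) + 4⁻¹)
      ≤ aSeq n * ((2*n+1)/(2*n+2) * Real.sqrt ((n:ℝ)+1+4⁻¹)) :=
        mul_le_mul_of_nonneg_left hs (aSeq_pos n).le
    _ = aSeq n * ((2*↑n+1)/(2*↑n+2)) * Real.sqrt (↑(n+1) + 4⁻¹) := by
        push_cast; ring

lemma c_anti' : Antitone (fun n : ℕ => aSeq n * Real.sqrt ((n:ℝ) + 3⁻¹)) := by
  apply antitone_nat_of_succ_le
  intro n
  -- need : aSeq n * ((2n+1)/(2n+2)) * √(n+1+1/3) ≤ aSeq n * √(n+1/3)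
  have h2 : (0:ℝ) < 2*(n:ℝ)+2 := by positivity
  have hq : (0:ℝ) ≤ (2*(n:ℝ)+1)/(2*n+2) := by positivity
  have key : ((2*(n:ℝ)+1)/(2*n+2))^2 * ((n:ℝ)+1+3⁻¹) ≤ (n:ℝ) + 3⁻¹ := by
    rw [div_pow, div_mul_eq_mul_div, div_le_iff₀ (by positivity)]
    nlinarith [sq_nonneg ((n:ℝ))]
  have hs := Real.sqrt_le_sqrt key
  rw [Real.sqrt_mul (by positivity), Real.sqrt_sq hq] at hs
  calc aSeq (n+1) * Real.sqrt (↑(n+1) + 3⁻¹)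
      = aSeq n * ((2*↑n+1)/(2*↑n+2) * Real.sqrt ((n:ℝ)+1+3⁻¹)) := by
        rw [aSeq_succ n]; push_cast; ring
    _ ≤ aSeq n * Real.sqrt ((n:ℝ) + 3⁻¹) := mul_le_mul_of_nonneg_left hs (aSeq_pos n).le

lemma aSeq_le (n : ℕ) : aSeq n * Real.sqrt ((n:ℝ) + 4⁻¹) ≤ 1 / Real.sqrt π :=
  b_mono.ge_of_tendsto (by simpa using tendsto_aSeq_sqrt_add 4⁻¹ (by norm_num)) n

lemma aSeq_ge (n : ℕ) : 1 / Real.sqrt π ≤ aSeq n * Real.sqrt ((n:ℝ) + 3⁻¹) :=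
  c_anti'.le_of_tendsto (by simpa using tendsto_aSeq_sqrt_add 3⁻¹ (by norm_num)) n


lemma keyD (nr x : ℝ) (hx1 : 1 ≤ x) (hxn : 4 * x ≤ nr ^ 2) (hn : 0 ≤ nr) :
    1 / Real.sqrt x - 1 / Real.sqrt (x + nr / 3 + 1 / 9) ≤ nr / (6 * (x * Real.sqrt x)) := by
  set u := Real.sqrt x with hu_def
  set v := Real.sqrt (x + nr / 3 + 1 / 9) with hv_def
  have hx0 : (0:ℝ) < x := by linarith
  have hu : 0 < u := Real.sqrt_pos.2 hx0
  have hv : 0 < v := Real.sqrt_pos.2 (by linarith)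
  have hu2 : u ^ 2 = x := Real.sq_sqrt hx0.le
  have hv2 : v ^ 2 = x + nr / 3 + 1 / 9 := Real.sq_sqrt (by linarith)
  have huv : u ≤ v := Real.sqrt_le_sqrt (by linarith)
  rw [div_sub_div _ _ hu.ne' hv.ne', div_le_div_iff₀ (by positivity) (by positivity)]
  have hsum : 0 < u + v := by linarith
  rw [← mul_le_mul_iff_of_pos_right hsum]
  have hdiff : (v - u) * (u + v) = nr / 3 + 1 / 9 := by nlinarith [hu2, hv2]
  have expand : (v - u) * (6 * (x * u)) * (u + v) = 6 * x * u * (nr / 3 + 1 / 9) := by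
    rw [show (v - u) * (6 * (x * u)) * (u + v) = (v - u) * (u + v) * (6 * (x * u)) by ring,
      hdiff]; ring
  rw [show (1 * v - u * 1) = v - u by ring, expand]
  have h1 : 0 ≤ nr * u * u * (v - u) :=
    mul_nonneg (mul_nonneg (mul_nonneg hn hu.le) hu.le) (sub_nonneg.2 huv)
  have h5 : nr * u * v ^ 2 = nr * u * (x + nr / 3 + 1 / 9) := by rw [hv2]
  have h6 : 0 ≤ u * (nr ^ 2 - 4 * x) := mul_nonneg hu.le (by linarith)
  nlinarith [h1, h5, h6, mul_nonneg hn hu.le, hu2, mul_pos hu hu,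
    mul_nonneg (mul_nonneg hn hu.le) hu.le]

set_option maxHeartbeats 1000000 in
/-- For `0 < k < n`, `|p_{2k,2n} - d_{k,n}| ≤ n/(6π(k(n-k))^{3/2})`, where
`p_{2k,2n} = C(2k,k)·C(2(n-k),n-k)·2^{-2n}` and `d_{k,n} = 1/(π√(k(n-k)))`. -/
theorem abs_p_sub_d_le (n k : ℕ) (hk : 0 < k) (hkn : k < n) :
    |(Nat.choose (2 * k) k : ℝ) * (Nat.choose (2 * (n - k)) (n - k) : ℝ) / 2 ^ (2 * n) -
        1 / (Real.pi * Real.sqrt ((k * (n - k) : ℕ) : ℝ))| ≤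
      (n : ℝ) / (6 * Real.pi * ((k * (n - k) : ℕ) : ℝ) ^ ((3 : ℝ) / 2)) := by
  set m := n - k with hm_def
  have hm : 0 < m := by omega
  have hkm : k + m = n := by omega
  set K : ℝ := (k : ℝ) with hK_def
  set M : ℝ := (m : ℝ) with hM_def
  have hK : 1 ≤ K := by
    show (1:ℝ) ≤ (k:ℝ); exact_mod_cast Nat.one_le_iff_ne_zero.mpr hk.ne'
  have hM : 1 ≤ M := by
    show (1:ℝ) ≤ (m:ℝ); exact_mod_cast Nat.one_le_iff_ne_zero.mpr hm.ne'
  have hN : (n : ℝ) = K + M := by rw [hK_def, hM_def, ← hkm]; push_cast; ring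
  set x : ℝ := K * M with hx_def
  have hx1 : 1 ≤ x := by nlinarith
  have hx0 : (0:ℝ) < x := by linarith
  have hcastx : ((k * (n - k) : ℕ) : ℝ) = x := by
    rw [hx_def, hK_def, hM_def, ← hm_def]; push_cast; ring
  have hsx : 0 < Real.sqrt x := Real.sqrt_pos.2 hx0
  have hp_eq : (Nat.choose (2 * k) k : ℝ) * (Nat.choose (2 * (n - k)) (n - k) : ℝ) / 2 ^ (2 * n)
      = aSeq k * aSeq m := by
    have h2n : ((2:ℝ) ^ (2 * n)) = 4 ^ k * 4 ^ m := by
      rw [show 2 * n = 2 * (k + m) by omega, pow_mul, ← pow_add]; norm_num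
    unfold aSeq
    rw [← hm_def, ← Nat.centralBinom, ← Nat.centralBinom, h2n]
    field_simp
  rw [hp_eq, hcastx]
  set p := aSeq k * aSeq m with hp_def
  have hk4 : (0:ℝ) < Real.sqrt (K + 4⁻¹) := Real.sqrt_pos.2 (by linarith)
  have hm4 : (0:ℝ) < Real.sqrt (M + 4⁻¹) := Real.sqrt_pos.2 (by linarith)
  have hk3 : (0:ℝ) < Real.sqrt (K + 3⁻¹) := Real.sqrt_pos.2 (by linarith)
  have hm3 : (0:ℝ) < Real.sqrt (M + 3⁻¹) := Real.sqrt_pos.2 (by linarith)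
  have hsK : (0:ℝ) < Real.sqrt K := Real.sqrt_pos.2 (by linarith)
  have hsM : (0:ℝ) < Real.sqrt M := Real.sqrt_pos.2 (by linarith)
  have hsπ : (0:ℝ) < Real.sqrt π := Real.sqrt_pos.2 Real.pi_pos
  have hau_k : aSeq k ≤ 1 / Real.sqrt π / Real.sqrt (K + 4⁻¹) :=
    (le_div_iff₀ hk4).2 (aSeq_le k)
  have hau_m : aSeq m ≤ 1 / Real.sqrt π / Real.sqrt (M + 4⁻¹) :=
    (le_div_iff₀ hm4).2 (aSeq_le m)
  have hal_k : 1 / Real.sqrt π / Real.sqrt (K + 3⁻¹) ≤ aSeq k :=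
    (div_le_iff₀ hk3).2 (aSeq_ge k)
  have hal_m : 1 / Real.sqrt π / Real.sqrt (M + 3⁻¹) ≤ aSeq m :=
    (div_le_iff₀ hm3).2 (aSeq_ge m)
  have hup_k : aSeq k ≤ 1 / Real.sqrt π / Real.sqrt K := by
    refine hau_k.trans ?_
    gcongr
    linarith
  have hup_m : aSeq m ≤ 1 / Real.sqrt π / Real.sqrt M := by
    refine hau_m.trans ?_
    gcongr
    linarith
  have sqrt_prod : ∀ A B : ℝ, 0 ≤ A →
      (1 / Real.sqrt π / Real.sqrt A) * (1 / Real.sqrt π / Real.sqrt B)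
        = 1 / (π * Real.sqrt (A * B)) := by
    intro A B hA
    rw [Real.sqrt_mul hA]
    have h3 : Real.sqrt π ≠ 0 := hsπ.ne'
    field_simp
    rw [Real.sq_sqrt Real.pi_pos.le]
  have hpd : p ≤ 1 / (π * Real.sqrt x) := by
    rw [hx_def, ← sqrt_prod K M (by linarith), hp_def]
    exact mul_le_mul hup_k hup_m (aSeq_pos m).le (by positivity)
  set s : ℝ := x + (n : ℝ) / 3 + 1 / 9 with hs_def
  have hs0 : (0:ℝ) < s := by
    rw [hs_def]; positivity
  have hss : 0 < Real.sqrt s := Real.sqrt_pos.2 hs0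
  have hsplit : (K + 3⁻¹) * (M + 3⁻¹) = s := by rw [hs_def, hx_def, hN]; ring
  have hlo : 1 / (π * Real.sqrt s) ≤ p := by
    rw [← hsplit, ← sqrt_prod (K + 3⁻¹) (M + 3⁻¹) (by linarith), hp_def]
    exact mul_le_mul hal_k hal_m (by positivity) (aSeq_pos k).le
  have hxn4 : 4 * x ≤ ((n:ℝ)) ^ 2 := by
    rw [hN, hx_def]; nlinarith [sq_nonneg (K - M)]
  have hkey : 1 / Real.sqrt x - 1 / Real.sqrt s ≤ (n:ℝ) / (6 * (x * Real.sqrt x)) := by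
    rw [hs_def]
    exact keyD (n:ℝ) x hx1 hxn4 (by positivity)
  have hxr : x ^ ((3:ℝ)/2) = x * Real.sqrt x := by
    rw [show (3:ℝ)/2 = 1 + 1/2 by norm_num, Real.rpow_add hx0, Real.rpow_one,
      ← Real.sqrt_eq_rpow]
  rw [hxr]
  have habs : |p - 1 / (π * Real.sqrt x)| = 1 / (π * Real.sqrt x) - p := by
    rw [abs_of_nonpos (by linarith), neg_sub]
  rw [habs]
  have step2 : 1 / (π * Real.sqrt x) - 1 / (π * Real.sqrt s)
      = (1 / Real.sqrt x - 1 / Real.sqrt s) / π := by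
    field_simp
  have step3 : (1 / Real.sqrt x - 1 / Real.sqrt s) / π ≤ ((n:ℝ) / (6 * (x * Real.sqrt x))) / π :=
    div_le_div_of_nonneg_right hkey Real.pi_pos.le
  have step4 : ((n:ℝ) / (6 * (x * Real.sqrt x))) / π = (n:ℝ) / (6 * π * (x * Real.sqrt x)) := by
    rw [div_div]; ring_nf
  linarith [step2.le, step2.ge, step4.le, step4.ge]
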